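/- Let (𝒜⁽ⁿ⁾, τ⁽ⁿ⁾) for n ∈ ℕ and (𝒜, τ) be unital C*-algebras equipped with faithful tracial states. Let a⁽ⁿ⁾ ∈ 𝒜⁽ⁿ⁾ and a ∈ 𝒜 be such that for every noncommutative *-polynomial p in 2 variables, lim_{n→∞} ‖p(a⁽ⁿ⁾, (a⁽ⁿ⁾)*)‖ = ‖p(a, a*)‖ and lim_{n→∞} τ⁽ⁿ⁾(p(a⁽ⁿ⁾, (a⁽ⁿ⁾)*)) = τ(p(a, a*)). If a is invertible in 𝒜, then a⁽ⁿ⁾ is invertible in 𝒜⁽ⁿ⁾ for all sufficiently large n, and lim_{n→∞} τ⁽ⁿ⁾((a⁽ⁿ⁾)⁻¹) = τ(a⁻¹). -/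

import Mathlib

/-- `τ` is a faithful tracial state on the unital C⋆-algebra `A`:
a linear functional with `τ 1 = 1`, `τ (a* a) ≥ 0`, `τ (a b) = τ (b a)`, and
`τ (a* a) = 0 → a = 0`. -/
structure IsFaithfulTracialState (A : Type*) [CStarAlgebra A] (τ : A → ℂ) : Prop where
  map_add : ∀ a b, τ (a + b) = τ a + τ b
  map_smul : ∀ (c : ℂ) a, τ (c • a) = c * τ a
  map_one : τ 1 = 1
  nonneg_re : ∀ a, 0 ≤ (τ (star a * a)).re
  im_eq_zero : ∀ a, (τ (star a * a)).im = 0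
  tracial : ∀ a b, τ (a * b) = τ (b * a)
  faithful : ∀ a, τ (star a * a) = 0 → a = 0

namespace Stmt12Aux

variable {D : Type*} [CStarAlgebra D] {τ : D → ℂ}

/-- The trace as a linear map. -/
def lm (hτ : IsFaithfulTracialState D τ) : D →ₗ[ℂ] ℂ :=
  ⟨⟨τ, fun x y => hτ.map_add x y⟩, fun c x => hτ.map_smul c x⟩

@[simp] lemma lm_apply (hτ : IsFaithfulTracialState D τ) (x : D) : lm hτ x = τ x := rfl

lemma nontrivial (hτ : IsFaithfulTracialState D τ) : Nontrivial D := by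
  rcases subsingleton_or_nontrivial D with h | h
  · exfalso
    have h0 : τ 0 = 0 := by simpa using (lm hτ).map_zero
    have h1 : (1 : D) = 0 := Subsingleton.elim _ _
    have := hτ.map_one
    rw [h1, h0] at this
    exact one_ne_zero this.symm
  · exact h

lemma tau_star (hτ : IsFaithfulTracialState D τ) (x : D) : τ (star x) = starRingEnd ℂ (τ x) := by
  have key : ∀ y : D, (τ (star y * y)).im = 0 := hτ.im_eq_zero
  have h1 := key (x + 1)
  have h2 := key (x + Complex.I • 1)
  have e1 : star (x + 1) * (x + 1) = star x * x + (star x + (x + 1)) := by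
    simp [star_add, add_mul, mul_add]; abel
  have e2 : star (x + Complex.I • 1) * (x + Complex.I • 1)
      = star x * x + (Complex.I • star x + ((-Complex.I) • x + 1)) := by
    simp only [star_add, star_smul, star_one, Complex.star_def, Complex.conj_I, add_mul,
      mul_add, smul_mul_assoc, mul_smul_comm, mul_one, one_mul]
    match_scalars <;> simp [Complex.I_sq]
  rw [e1] at h1
  rw [e2] at h2
  have L := lm hτ
  simp only [show ∀ u v : D, τ (u + v) = τ u + τ v from hτ.map_add,
    show ∀ (c : ℂ) u, τ (c • u) = c * τ u from hτ.map_smul, hτ.map_one,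
    hτ.im_eq_zero x, Complex.add_im, Complex.mul_im, Complex.I_re, Complex.I_im,
    Complex.neg_im, Complex.neg_re, Complex.one_im] at h1 h2
  apply Complex.ext <;> simp only [Complex.conj_re, Complex.conj_im] <;> linarith


section Order
variable [PartialOrder D] [StarOrderedRing D]

lemma tau_nonneg (hτ : IsFaithfulTracialState D τ) {y : D} (hy : 0 ≤ y) :
    0 ≤ (τ y).re ∧ (τ y).im = 0 := by
  have hsq : IsSelfAdjoint (CFC.sqrt y) := IsSelfAdjoint.of_nonneg (CFC.sqrt_nonneg y)
  have h1 : star (CFC.sqrt y) * CFC.sqrt y = y := by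
    rw [hsq.star_eq]; exact CFC.sqrt_mul_sqrt_self y hy
  constructor
  · rw [← h1]; exact hτ.nonneg_re _
  · rw [← h1]; exact hτ.im_eq_zero _

lemma tau_algebraMap (hτ : IsFaithfulTracialState D τ) (r : ℝ) :
    τ (algebraMap ℝ D r) = (r : ℂ) := by
  rw [IsScalarTower.algebraMap_apply ℝ ℂ D, Complex.coe_algebraMap,
    Algebra.algebraMap_eq_smul_one, hτ.map_smul, hτ.map_one, mul_one]

lemma tau_star_mul_self_re_le (hτ : IsFaithfulTracialState D τ) (x : D) :
    (τ (star x * x)).re ≤ ‖x‖ * ‖x‖ := by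
  have hle : star x * x ≤ algebraMap ℝ D ‖star x * x‖ :=
    IsSelfAdjoint.le_algebraMap_norm_self (IsSelfAdjoint.star_mul_self x)
  have h0 : 0 ≤ algebraMap ℝ D ‖star x * x‖ - star x * x := sub_nonneg.mpr hle
  have h2 := (tau_nonneg hτ h0).1
  have h3 : τ (algebraMap ℝ D ‖star x * x‖ - star x * x)
      = (‖star x * x‖ : ℂ) - τ (star x * x) := by
    have := (lm hτ).map_sub (algebraMap ℝ D ‖star x * x‖) (star x * x)
    simpa [tau_algebraMap hτ] using this
  rw [h3] at h2
  simp only [Complex.sub_re, Complex.ofReal_re] at h2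
  have := CStarRing.norm_star_mul_self (x := x)
  linarith

lemma tau_norm_le (hτ : IsFaithfulTracialState D τ) (x : D) : ‖τ x‖ ≤ ‖x‖ := by
  set u := τ x with hu
  have expand : star (x - u • 1) * (x - u • 1)
      = star x * x - u • star x - (starRingEnd ℂ u) • x + (starRingEnd ℂ u * u) • 1 := by
    simp only [star_sub, star_smul, star_one, Complex.star_def, sub_mul, mul_sub,
      smul_mul_assoc, mul_smul_comm, mul_one, one_mul, smul_smul]
    match_scalars <;> ring
  have hre := hτ.nonneg_re (x - u • 1)
  rw [expand] at hre
  have lin : τ (star x * x - u • star x - (starRingEnd ℂ u) • x + (starRingEnd ℂ u * u) • 1)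
      = τ (star x * x) - u * τ (star x) - (starRingEnd ℂ u) * τ x + (starRingEnd ℂ u * u) := by
    have h1 := (lm hτ).map_sub (star x * x) (u • star x)
    have h2 := (lm hτ).map_sub (star x * x - u • star x) ((starRingEnd ℂ u) • x)
    have h3 := (lm hτ).map_add (star x * x - u • star x - (starRingEnd ℂ u) • x)
      ((starRingEnd ℂ u * u) • 1)
    simp only [lm_apply, hτ.map_smul, hτ.map_one, mul_one] at h1 h2 h3
    rw [h3, h2, h1]
  rw [lin, tau_star hτ] at hre
  have key : (τ (star x * x) - u * starRingEnd ℂ u - starRingEnd ℂ u * u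
      + starRingEnd ℂ u * u) = τ (star x * x) - u * starRingEnd ℂ u := by ring
  rw [key] at hre
  have hmc : (u * starRingEnd ℂ u).re = ‖u‖ * ‖u‖ := by
    rw [Complex.mul_conj]
    simp [Complex.normSq_eq_norm_sq, sq]
  have h2 := tau_star_mul_self_re_le hτ x
  rw [Complex.sub_re, hmc] at hre
  nlinarith [norm_nonneg x, norm_nonneg u]

end Order

section Spec

lemma cfc_shift (M : ℝ) {x : D} (hx : IsSelfAdjoint x) :
    cfc (fun t : ℝ => M - t) x = algebraMap ℂ D (M : ℂ) - x := by
  rw [cfc_sub (fun _ => M) (fun t => t) x, cfc_const M x, cfc_id' ℝ x,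
    IsScalarTower.algebraMap_apply ℝ ℂ D, Complex.coe_algebraMap]

lemma spec_lt_of_norm_lt {x : D} (hx : IsSelfAdjoint x) {M δ : ℝ}
    (h : ‖algebraMap ℂ D (M : ℂ) - x‖ < M - δ) : ∀ t ∈ spectrum ℝ x, δ < t := by
  intro t ht
  have h1 : ‖M - t‖ ≤ ‖cfc (fun t : ℝ => M - t) x‖ := norm_apply_le_norm_cfc _ x ht
  rw [cfc_shift M hx] at h1
  have h2 := lt_of_le_of_lt h1 h
  rw [Real.norm_eq_abs] at h2
  rcases abs_lt.mp h2 with ⟨h3, h4⟩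
  linarith

lemma isUnit_of_spec_lt {x : D} {δ : ℝ} (hδ : 0 ≤ δ) (h : ∀ t ∈ spectrum ℝ x, δ < t) :
    IsUnit x := by
  rw [← spectrum.zero_notMem_iff ℝ]
  intro h0
  exact absurd (h 0 h0) (by linarith)

lemma norm_shift_le [Nontrivial D] {x : D} (hx : IsSelfAdjoint x) {M δ : ℝ}
    (hδ0 : 0 ≤ δ) (hM : ‖x‖ ≤ M) (h : ∀ t ∈ spectrum ℝ x, δ ≤ t) :
    ‖algebraMap ℂ D (M : ℂ) - x‖ ≤ M - δ := by
  have hδM : δ ≤ M := by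
    obtain ⟨t0, ht0⟩ := hx.spectrum_nonempty
    have := spectrum.norm_le_norm_of_mem ht0
    rw [Real.norm_eq_abs] at this
    have := le_abs_self t0
    have := h t0 ht0
    linarith
  rw [← cfc_shift M hx]
  apply norm_cfc_le (by linarith)
  intro t ht
  have h1 : δ ≤ t := h t ht
  have h2 : |t| ≤ ‖x‖ := by
    simpa [Real.norm_eq_abs] using spectrum.norm_le_norm_of_mem ht
  rw [Real.norm_eq_abs]
  rw [abs_le] at *
  constructor <;> [linarith; linarith]

lemma spec_lower_of_isUnit [Nontrivial D] [PartialOrder D] [StarOrderedRing D] {x : D}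
    (hx : IsUnit x) (hx0 : 0 ≤ x) :
    ∀ t ∈ spectrum ℝ x, (‖((hx.unit⁻¹ : Dˣ) : D)‖)⁻¹ ≤ t := by
  intro t ht
  set N := ‖((hx.unit⁻¹ : Dˣ) : D)‖ with hN
  have hN0 : 0 < N := norm_pos_iff.mpr (Units.ne_zero _)
  have ht0 : 0 ≤ t := spectrum_nonneg_of_nonneg hx0 ht
  have htne : t ≠ 0 := by
    rintro rfl
    exact (spectrum.zero_mem_iff ℝ).mp ht hx
  have htpos : 0 < t := lt_of_le_of_ne ht0 (Ne.symm htne)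
  have hmem : ((Units.mk0 t htne : ℝˣ) : ℝ) ∈ spectrum ℝ ((hx.unit : Dˣ) : D) := by
    simpa [hx.unit_spec] using ht
  have hinv : t⁻¹ ∈ spectrum ℝ (((hx.unit)⁻¹ : Dˣ) : D) := by
    simpa using spectrum.inv_mem_iff.mp hmem
  have h4 : t⁻¹ ≤ N := by
    simpa [Real.norm_eq_abs, abs_inv, abs_of_pos htpos] using
      spectrum.norm_le_norm_of_mem hinv
  have h5 : 1 ≤ N * t := by
    calc (1 : ℝ) = t⁻¹ * t := (inv_mul_cancel₀ htne).symm
    _ ≤ N * t := mul_le_mul_of_nonneg_right h4 ht0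
  rw [inv_le_iff_one_le_mul₀ hN0]
  linarith [mul_comm N t]

lemma isUnit_of_components {x : D} (h1 : IsUnit (star x * x)) (h2 : IsUnit (x * star x)) :
    IsUnit x := by
  obtain ⟨u, hu⟩ := h1
  obtain ⟨v, hv⟩ := h2
  have hl : ((u⁻¹ : Dˣ) : D) * star x * x = 1 := by
    rw [mul_assoc, ← hu, Units.inv_mul]
  have hr : x * (star x * ((v⁻¹ : Dˣ) : D)) = 1 := by
    rw [← mul_assoc, ← hv, Units.mul_inv]
  have heq : ((u⁻¹ : Dˣ) : D) * star x = star x * ((v⁻¹ : Dˣ) : D) := by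
    calc ((u⁻¹ : Dˣ) : D) * star x
        = (((u⁻¹ : Dˣ) : D) * star x) * (x * (star x * ((v⁻¹ : Dˣ) : D))) := by rw [hr, mul_one]
      _ = ((((u⁻¹ : Dˣ) : D) * star x) * x) * (star x * ((v⁻¹ : Dˣ) : D)) := by
          simp only [mul_assoc]
      _ = star x * ((v⁻¹ : Dˣ) : D) := by rw [mul_assoc ((u⁻¹ : Dˣ) : D)] at hl ⊢; rw [hl, one_mul]
  refine ⟨⟨x, star x * ((v⁻¹ : Dˣ) : D), hr, ?_⟩, rfl⟩
  show star x * ((v⁻¹ : Dˣ) : D) * x = 1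
  rw [← heq]
  exact hl

lemma ring_inverse_eq_of_mul_eq_one {x y : D} (hx : IsUnit x) (h : y * x = 1) :
    Ring.inverse x = y := by
  have h2 : x * Ring.inverse x = 1 := Ring.mul_inverse_cancel x hx
  calc Ring.inverse x = 1 * Ring.inverse x := (one_mul _).symm
    _ = (y * x) * Ring.inverse x := by rw [h]
    _ = y * (x * Ring.inverse x) := by rw [mul_assoc]
    _ = y := by rw [h2, mul_one]

end Spec

open Polynomial in
lemma est [PartialOrder D] [StarOrderedRing D]
    (hτ : IsFaithfulTracialState D τ) {x : D} (hx : IsUnit x) (hb : IsUnit (star x * x))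
    {q : ℝ[X]} {ε K : ℝ} (hε : 0 ≤ ε) (hK : ‖x‖ ≤ K)
    (hq : ∀ t ∈ spectrum ℝ (star x * x), t ≠ 0 ∧ |q.eval t - t⁻¹| ≤ ε) :
    ‖τ (Ring.inverse x) - τ ((Polynomial.aeval (star x * x)) q * star x)‖ ≤ ε * K := by
  have hbsa : IsSelfAdjoint (star x * x) := IsSelfAdjoint.star_mul_self x
  have hne : ∀ t ∈ spectrum ℝ (star x * x), t ≠ 0 := fun t ht => (hq t ht).1
  have hcont : ContinuousOn (fun t : ℝ => t⁻¹) (spectrum ℝ (star x * x)) :=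
    ContinuousOn.inv₀ continuousOn_id hne
  have hinv_cfc : Ring.inverse (star x * x) = cfc (fun t : ℝ => t⁻¹) (star x * x) := by
    have h := cfc_inv (R := ℝ) id (star x * x) hne (by fun_prop) hbsa
    simp only [id_eq] at h
    rw [cfc_id ℝ (star x * x)] at h
    exact h.symm
  have hq_cfc : (aeval (star x * x)) q = cfc (fun t => q.eval t) (star x * x) :=
    (cfc_polynomial q (star x * x)).symm
  have hdiff : Ring.inverse (star x * x) - (aeval (star x * x)) q
      = cfc (fun t : ℝ => t⁻¹ - q.eval t) (star x * x) := by
    rw [cfc_sub (fun t : ℝ => t⁻¹) (fun t => q.eval t) (star x * x) hcont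
      (q.continuous.continuousOn), ← hinv_cfc, ← hq_cfc]
  have hnrm : ‖Ring.inverse (star x * x) - (aeval (star x * x)) q‖ ≤ ε := by
    rw [hdiff]
    apply norm_cfc_le hε
    intro t ht
    rw [Real.norm_eq_abs, abs_sub_comm]
    exact (hq t ht).2
  have hinvx : Ring.inverse x = Ring.inverse (star x * x) * star x := by
    refine ring_inverse_eq_of_mul_eq_one (y := Ring.inverse (star x * x) * star x) hx ?_
    rw [mul_assoc]
    exact Ring.inverse_mul_cancel (star x * x) hb
  have hmain : τ (Ring.inverse x) - τ ((aeval (star x * x)) q * star x)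
      = τ ((Ring.inverse (star x * x) - (aeval (star x * x)) q) * star x) := by
    rw [hinvx, sub_mul]
    exact ((lm hτ).map_sub _ _).symm
  rw [hmain]
  calc ‖τ ((Ring.inverse (star x * x) - (aeval (star x * x)) q) * star x)‖
      ≤ ‖(Ring.inverse (star x * x) - (aeval (star x * x)) q) * star x‖ := tau_norm_le hτ _
    _ ≤ ‖Ring.inverse (star x * x) - (aeval (star x * x)) q‖ * ‖star x‖ := norm_mul_le _ _
    _ ≤ ε * K := by
        rw [norm_star]
        exact mul_le_mul hnrm hK (norm_nonneg x) hε


section Eval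

open Polynomial

lemma eval_p0 (x : D) :
    FreeAlgebra.lift ℂ ![x, star x] (FreeAlgebra.ι ℂ (0 : Fin 2)) = x := by
  simp [FreeAlgebra.lift_ι_apply]

lemma eval_pb (x : D) :
    FreeAlgebra.lift ℂ ![x, star x]
      (FreeAlgebra.ι ℂ (1 : Fin 2) * FreeAlgebra.ι ℂ (0 : Fin 2)) = star x * x := by
  simp [FreeAlgebra.lift_ι_apply]

lemma eval_pc (x : D) :
    FreeAlgebra.lift ℂ ![x, star x]
      (FreeAlgebra.ι ℂ (0 : Fin 2) * FreeAlgebra.ι ℂ (1 : Fin 2)) = x * star x := by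
  simp [FreeAlgebra.lift_ι_apply]

lemma eval_pe (x : D) (M : ℝ) :
    FreeAlgebra.lift ℂ ![x, star x]
      (algebraMap ℂ (FreeAlgebra ℂ (Fin 2)) (M : ℂ)
        - FreeAlgebra.ι ℂ (1 : Fin 2) * FreeAlgebra.ι ℂ (0 : Fin 2))
      = algebraMap ℂ D (M : ℂ) - star x * x := by
  simp [FreeAlgebra.lift_ι_apply, AlgHom.commutes]

lemma eval_pec (x : D) (M : ℝ) :
    FreeAlgebra.lift ℂ ![x, star x]
      (algebraMap ℂ (FreeAlgebra ℂ (Fin 2)) (M : ℂ)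
        - FreeAlgebra.ι ℂ (0 : Fin 2) * FreeAlgebra.ι ℂ (1 : Fin 2))
      = algebraMap ℂ D (M : ℂ) - x * star x := by
  simp [FreeAlgebra.lift_ι_apply, AlgHom.commutes]

lemma eval_pq (x : D) (q : ℝ[X]) :
    FreeAlgebra.lift ℂ ![x, star x]
      ((Polynomial.aeval (FreeAlgebra.ι ℂ (1 : Fin 2) * FreeAlgebra.ι ℂ (0 : Fin 2)))
          (q.map (algebraMap ℝ ℂ)) * FreeAlgebra.ι ℂ (1 : Fin 2))
      = (Polynomial.aeval (star x * x)) q * star x := by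
  rw [map_mul]
  rw [← Polynomial.aeval_algHom_apply]
  rw [eval_pb]
  congr 1
  · rw [Polynomial.aeval_map_algebraMap]
  · simp [FreeAlgebra.lift_ι_apply]

end Eval

end Stmt12Aux

open Filter Topology

/-- If `a⁽ⁿ⁾` converges to `a` in norm and in trace for all noncommutative `*`-polynomials
in 2 variables, in the setting of unital C⋆-algebras with faithful tracial states, and `a`
is invertible, then `a⁽ⁿ⁾` is invertible for all sufficiently large `n` and
`τ⁽ⁿ⁾((a⁽ⁿ⁾)⁻¹) → τ(a⁻¹)`. -/
theorem stmt12 {A : ℕ → Type*} [∀ n, CStarAlgebra (A n)] {B : Type*} [CStarAlgebra B]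
    (τ' : ∀ n, A n → ℂ) (τ : B → ℂ)
    (hτ' : ∀ n, IsFaithfulTracialState (A n) (τ' n)) (hτ : IsFaithfulTracialState B τ)
    (a' : ∀ n, A n) (a : B)
    (hnorm : ∀ p : FreeAlgebra ℂ (Fin 2),
      Tendsto (fun n => ‖FreeAlgebra.lift ℂ ![a' n, star (a' n)] p‖) atTop
        (𝓝 ‖FreeAlgebra.lift ℂ ![a, star a] p‖))
    (htr : ∀ p : FreeAlgebra ℂ (Fin 2),
      Tendsto (fun n => τ' n (FreeAlgebra.lift ℂ ![a' n, star (a' n)] p)) atTop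
        (𝓝 (τ (FreeAlgebra.lift ℂ ![a, star a] p))))
    (ha : IsUnit a) :
    (∀ᶠ n in atTop, IsUnit (a' n)) ∧
      Tendsto (fun n => τ' n (Ring.inverse (a' n))) atTop (𝓝 (τ (Ring.inverse a))) := by
  classical
  haveI hNB : Nontrivial B := Stmt12Aux.nontrivial hτ
  have hNA : ∀ n, Nontrivial (A n) := fun n => Stmt12Aux.nontrivial (hτ' n)
  letI : PartialOrder B := CStarAlgebra.spectralOrder B
  haveI : StarOrderedRing B := CStarAlgebra.spectralOrderedRing B
  -- basic data on the `B` side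
  have hbU : IsUnit (star a * a) := ha.star.mul ha
  have hcU : IsUnit (a * star a) := ha.mul ha.star
  have hbsa : IsSelfAdjoint (star a * a) := IsSelfAdjoint.star_mul_self a
  have hcsa : IsSelfAdjoint (a * star a) := IsSelfAdjoint.mul_star_self a
  set δ : ℝ := (‖((hbU.unit⁻¹ : Bˣ) : B)‖)⁻¹ with hδdef
  have hδpos : 0 < δ := inv_pos.mpr (norm_pos_iff.mpr (Units.ne_zero _))
  have hspecb : ∀ t ∈ spectrum ℝ (star a * a), δ ≤ t :=
    Stmt12Aux.spec_lower_of_isUnit hbU (star_mul_self_nonneg a)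
  set δc : ℝ := (‖((hcU.unit⁻¹ : Bˣ) : B)‖)⁻¹ with hδcdef
  have hδcpos : 0 < δc := inv_pos.mpr (norm_pos_iff.mpr (Units.ne_zero _))
  have hspecc : ∀ t ∈ spectrum ℝ (a * star a), δc ≤ t :=
    Stmt12Aux.spec_lower_of_isUnit hcU (mul_star_self_nonneg a)
  set M : ℝ := ‖star a * a‖ + 1 with hMdef
  set Mc : ℝ := ‖a * star a‖ + 1 with hMcdef
  set K : ℝ := ‖a‖ + 1 with hKdef
  have hK : (0 : ℝ) < K := by positivity
  -- limit norms
  have hlimb : ‖algebraMap ℂ B (M : ℂ) - star a * a‖ ≤ M - δ :=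
    Stmt12Aux.norm_shift_le hbsa hδpos.le (by simp [hMdef]) hspecb
  have hlimc : ‖algebraMap ℂ B (Mc : ℂ) - a * star a‖ ≤ Mc - δc :=
    Stmt12Aux.norm_shift_le hcsa hδcpos.le (by simp [hMcdef]) hspecc
  -- eventual facts
  have Tb := hnorm (algebraMap ℂ (FreeAlgebra ℂ (Fin 2)) (M : ℂ)
    - FreeAlgebra.ι ℂ (1 : Fin 2) * FreeAlgebra.ι ℂ (0 : Fin 2))
  simp only [Stmt12Aux.eval_pe] at Tb
  have E1 : ∀ᶠ n in atTop, ‖algebraMap ℂ (A n) (M : ℂ) - star (a' n) * a' n‖ < M - δ / 2 :=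
    Tb.eventually_lt_const (by linarith)
  have Tc := hnorm (algebraMap ℂ (FreeAlgebra ℂ (Fin 2)) (Mc : ℂ)
    - FreeAlgebra.ι ℂ (0 : Fin 2) * FreeAlgebra.ι ℂ (1 : Fin 2))
  simp only [Stmt12Aux.eval_pec] at Tc
  have E1c : ∀ᶠ n in atTop, ‖algebraMap ℂ (A n) (Mc : ℂ) - a' n * star (a' n)‖ < Mc - δc / 2 :=
    Tc.eventually_lt_const (by linarith)
  have TB2 := hnorm (FreeAlgebra.ι ℂ (1 : Fin 2) * FreeAlgebra.ι ℂ (0 : Fin 2))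
  simp only [Stmt12Aux.eval_pb] at TB2
  have E2 : ∀ᶠ n in atTop, ‖star (a' n) * a' n‖ ≤ M :=
    (TB2.eventually_lt_const (by simp [hMdef])).mono fun n h => h.le
  have T3 := hnorm (FreeAlgebra.ι ℂ (0 : Fin 2))
  simp only [Stmt12Aux.eval_p0] at T3
  have E3 : ∀ᶠ n in atTop, ‖a' n‖ ≤ K :=
    (T3.eventually_lt_const (by simp [hKdef])).mono fun n h => h.le
  -- invertibility of the approximants
  have Eb : ∀ᶠ n in atTop, IsUnit (star (a' n) * a' n) ∧
      ∀ t ∈ spectrum ℝ (star (a' n) * a' n), δ / 2 < t := by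
    filter_upwards [E1] with n h
    have hsa : IsSelfAdjoint (star (a' n) * a' n) := IsSelfAdjoint.star_mul_self (a' n)
    have hs := Stmt12Aux.spec_lt_of_norm_lt hsa h
    exact ⟨Stmt12Aux.isUnit_of_spec_lt (by linarith) hs, hs⟩
  have Ec : ∀ᶠ n in atTop, IsUnit (a' n * star (a' n)) := by
    filter_upwards [E1c] with n h
    have hsa : IsSelfAdjoint (a' n * star (a' n)) := IsSelfAdjoint.mul_star_self (a' n)
    exact Stmt12Aux.isUnit_of_spec_lt (by linarith)
      (Stmt12Aux.spec_lt_of_norm_lt hsa h)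
  have hUnit : ∀ᶠ n in atTop, IsUnit (a' n) := by
    filter_upwards [Eb, Ec] with n h1 h2
    exact Stmt12Aux.isUnit_of_components h1.1 h2
  refine ⟨hUnit, ?_⟩
  -- trace convergence
  rw [Metric.tendsto_nhds]
  intro ε hε
  set ε' : ℝ := ε / (4 * K) with hε'def
  have hε' : 0 < ε' := by positivity
  have hEK : ε' * K = ε / 4 := by
    rw [hε'def]; field_simp
  -- Weierstrass approximation of the inverse
  obtain ⟨q, hqa⟩ := exists_polynomial_near_of_continuousOn (δ / 2) M (fun t => t⁻¹)
    (ContinuousOn.inv₀ continuousOn_id fun t ht => by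
      have := ht.1; intro h0; rw [h0] at this; linarith) ε' hε'
  -- B-side estimate
  have hqB : ∀ t ∈ spectrum ℝ (star a * a), t ≠ 0 ∧ |q.eval t - t⁻¹| ≤ ε' := by
    intro t ht
    have h1 := hspecb t ht
    have h2 : |t| ≤ ‖star a * a‖ := by
      simpa [Real.norm_eq_abs] using spectrum.norm_le_norm_of_mem ht
    have h3 := le_abs_self t
    exact ⟨by intro h0; rw [h0] at h1; linarith,
      (hqa t ⟨by linarith, by simp only [hMdef]; linarith⟩).le⟩
  have estB : ‖τ (Ring.inverse a) - τ ((Polynomial.aeval (star a * a)) q * star a)‖ ≤ ε' * K :=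
    Stmt12Aux.est hτ ha hbU hε'.le (by simp [hKdef]) hqB
  -- middle term
  have Tmid := htr ((Polynomial.aeval (FreeAlgebra.ι ℂ (1 : Fin 2) * FreeAlgebra.ι ℂ (0 : Fin 2)))
    (q.map (algebraMap ℝ ℂ)) * FreeAlgebra.ι ℂ (1 : Fin 2))
  simp only [Stmt12Aux.eval_pq] at Tmid
  have Emid := Metric.tendsto_nhds.mp Tmid (ε / 4) (by positivity)
  -- final assembly
  filter_upwards [Eb, E2, E3, Emid, hUnit] with n h1 hE2 hE3 hmid hu
  haveI : Nontrivial (A n) := hNA n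
  letI : PartialOrder (A n) := CStarAlgebra.spectralOrder (A n)
  haveI : StarOrderedRing (A n) := CStarAlgebra.spectralOrderedRing (A n)
  have hqn : ∀ t ∈ spectrum ℝ (star (a' n) * a' n), t ≠ 0 ∧ |q.eval t - t⁻¹| ≤ ε' := by
    intro t ht
    have hlt := h1.2 t ht
    have h2 : |t| ≤ ‖star (a' n) * a' n‖ := by
      simpa [Real.norm_eq_abs] using spectrum.norm_le_norm_of_mem ht
    have h3 := le_abs_self t
    exact ⟨by intro h0; rw [h0] at hlt; linarith,
      (hqa t ⟨hlt.le, by linarith⟩).le⟩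
  have estn : ‖τ' n (Ring.inverse (a' n))
      - τ' n ((Polynomial.aeval (star (a' n) * a' n)) q * star (a' n))‖ ≤ ε' * K :=
    Stmt12Aux.est (hτ' n) hu h1.1 hε'.le hE3 hqn
  have d1 : dist (τ' n (Ring.inverse (a' n)))
      (τ' n ((Polynomial.aeval (star (a' n) * a' n)) q * star (a' n))) ≤ ε / 4 := by
    rw [dist_eq_norm]; rw [← hEK]; exact estn
  have d3 : dist (τ ((Polynomial.aeval (star a * a)) q * star a)) (τ (Ring.inverse a)) ≤ ε / 4 := by
    rw [dist_comm, dist_eq_norm, ← hEK]; exact estB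
  calc dist (τ' n (Ring.inverse (a' n))) (τ (Ring.inverse a))
      ≤ dist (τ' n (Ring.inverse (a' n)))
          (τ' n ((Polynomial.aeval (star (a' n) * a' n)) q * star (a' n)))
        + dist (τ' n ((Polynomial.aeval (star (a' n) * a' n)) q * star (a' n)))
            (τ ((Polynomial.aeval (star a * a)) q * star a))
        + dist (τ ((Polynomial.aeval (star a * a)) q * star a)) (τ (Ring.inverse a)) :=
      dist_triangle4 _ _ _ _
    _ < ε := by linarith [hmid]
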